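/- Let F be a field, H a finite subset of F with |H| = h ≥ 1, k ≥ 1, d ≥ 1, t natural numbers, and g : H^k → F a function. Suppose there exists a positive integer l with k·(h − 1)/d < l < t/(d·h^{k−1}) (i.e., l·d > k·(h−1) and l·d·h^{k−1} < t). Then there exists a polynomial P ∈ F[x₁,…,x_k, y], not identically zero, with (1,…,1,d)-weighted degree at most l·d, vanishing at (a, g(a)) for every a ∈ H^k, and such that every f ∈ F[x₁,…,x_k] of total degree at most d satisfying f(a) = g(a) for at least t points a ∈ H^k has y − f(x₁,…,x_k) dividing P(x₁,…,x_k, y) in F[x₁,…,x_k, y]. -/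

import Mathlib

open MvPolynomial

section Aux

variable (F : Type*) [Field F] (k : ℕ)

noncomputable def sudanLastEquiv :
    MvPolynomial (Fin (k + 1)) F ≃ₐ[F] Polynomial (MvPolynomial (Fin k) F) :=
  (renameEquiv F finSuccEquivLast).trans (optionEquivLeft F (Fin k))

lemma sudanLastEquiv_X_last :
    sudanLastEquiv F k (X (Fin.last k)) = Polynomial.X := by
  simp [sudanLastEquiv, renameEquiv_apply, rename_X, finSuccEquivLast_last,
    optionEquivLeft_X_none]

lemma sudanLastEquiv_X_castSucc (i : Fin k) :
    sudanLastEquiv F k (X (Fin.castSucc i)) = Polynomial.C (X i) := by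
  simp [sudanLastEquiv, renameEquiv_apply, rename_X, finSuccEquivLast_castSucc,
    optionEquivLeft_X_some]

lemma sudanLastEquiv_C (r : F) :
    sudanLastEquiv F k (C r) = Polynomial.C (C r) := by
  simp [sudanLastEquiv, renameEquiv_apply, rename_C, optionEquivLeft_C]

lemma sudanLastEquiv_rename (f : MvPolynomial (Fin k) F) :
    sudanLastEquiv F k (rename Fin.castSucc f) = Polynomial.C f := by
  have h : (sudanLastEquiv F k).toAlgHom.comp (rename Fin.castSucc) =
      (IsScalarTower.toAlgHom F (MvPolynomial (Fin k) F)
        (Polynomial (MvPolynomial (Fin k) F))) := by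
    apply MvPolynomial.algHom_ext
    intro i
    simp [sudanLastEquiv_X_castSucc, Polynomial.algebraMap_eq]
  have := DFunLike.congr_fun h f
  simpa [Polynomial.algebraMap_eq] using this

lemma sudanLastEquiv_eval (s : Fin k → F) (y : F) (p : MvPolynomial (Fin (k + 1)) F) :
    eval (Fin.snoc s y) p =
      Polynomial.eval y ((sudanLastEquiv F k p).map (eval s)) := by
  have hhom : (eval (Fin.snoc s y) : MvPolynomial (Fin (k+1)) F →+* F) =
      ((Polynomial.evalRingHom y).comp ((Polynomial.mapRingHom (eval s)).comp
        (sudanLastEquiv F k).toAlgHom.toRingHom)) := by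
    apply MvPolynomial.ringHom_ext
    · intro r
      simp only [eval_C, RingHom.comp_apply, AlgHom.toRingHom_eq_coe, RingHom.coe_coe,
        AlgEquiv.coe_algHom, AlgHom.coe_coe]
      have : sudanLastEquiv F k (C r) = Polynomial.C (C r) := by
        simp [sudanLastEquiv, renameEquiv_apply, rename_C, optionEquivLeft_C]
      rw [this]
      simp
    · intro i
      simp only [eval_X, RingHom.comp_apply, AlgHom.toRingHom_eq_coe, RingHom.coe_coe,
        AlgEquiv.coe_algHom, AlgHom.coe_coe]
      refine Fin.lastCases ?_ ?_ i
      · rw [sudanLastEquiv_X_last]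
        simp [Fin.snoc_last]
      · intro j
        rw [sudanLastEquiv_X_castSucc]
        simp [Fin.snoc_castSucc]
  exact DFunLike.congr_fun hhom p

open scoped Classical in
lemma sudan_aux_sz (H : Finset F) :
    ∀ (n : ℕ) (p : MvPolynomial (Fin n) F), p ≠ 0 →
      (Finset.univ.filter
        (fun a : Fin n → ↥H => eval (fun i => (a i : F)) p = 0)).card * H.card
        ≤ p.totalDegree * H.card ^ n := by
  intro n
  induction n with
  | zero =>
    intro p hp
    obtain ⟨c, rfl⟩ := MvPolynomial.C_surjective (Fin 0) p
    have hc : c ≠ 0 := fun h => hp (by simp [h])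
    have he : (Finset.univ.filter
        (fun a : Fin 0 → ↥H => eval (fun i => (a i : F)) (C c) = 0)) = ∅ := by
      apply Finset.filter_false_of_mem
      intro a _
      simpa using hc
    simp [he, hc]
  | succ n IH =>
    intro p hp
    set q := finSuccEquiv F n p with hqdef
    have hq : q ≠ 0 := by
      simpa [hqdef] using (map_ne_zero_iff _ (finSuccEquiv F n).injective).mpr hp
    set dq := q.natDegree with hdq
    set c := q.coeff dq with hcdef
    have hc : c ≠ 0 := by
      simpa [hcdef, hdq] using Polynomial.leadingCoeff_ne_zero.mpr hq
    have hdeg : c.totalDegree + dq ≤ p.totalDegree :=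
      totalDegree_coeff_finSuccEquiv_add_le p dq hc
    have heval : ∀ a : Fin (n+1) → ↥H,
        eval (fun i => (a i : F)) p =
          Polynomial.eval (a 0 : F)
            (q.map (eval (fun i => ((a i.succ : F))))) := by
      intro a
      have : (fun i => (a i : F)) = Fin.cons (a 0 : F) (fun i => (a i.succ : F)) := by
        funext i
        refine Fin.cases ?_ ?_ i <;> simp
      rw [this, eval_eq_eval_mv_eval']
    set Z := Finset.univ.filter
        (fun a : Fin (n+1) → ↥H => eval (fun i => (a i : F)) p = 0) with hZ
    set B := Finset.univ.filter
        (fun b : Fin n → ↥H => eval (fun i => (b i : F)) c = 0) with hB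
    have hfib : ∀ b : Fin n → ↥H,
        (Z.filter (fun a => Fin.tail a = b)).card ≤
          if b ∈ B then H.card else dq := by
      intro b
      by_cases hbB : b ∈ B
      · rw [if_pos hbB]
        have : (Z.filter (fun a => Fin.tail a = b)).card ≤ (Finset.univ : Finset ↥H).card := by
          apply Finset.card_le_card_of_injOn (fun a => a 0)
          · intro a _; exact Finset.mem_univ _
          · intro a ha a' ha' h0
            simp only [Finset.coe_filter, Set.mem_setOf_eq] at ha ha'
            funext i
            refine Fin.cases ?_ ?_ i
            · exact h0
            · intro j
              exact congrFun (ha.2.trans ha'.2.symm) j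
        simpa using this
      · rw [if_neg hbB]
        simp only [hB, Finset.mem_filter, Finset.mem_univ, true_and] at hbB
        set qb := q.map (eval (fun i => ((b i : F)))) with hqb
        have hqbc : qb.coeff dq ≠ 0 := by
          rw [hqb, Polynomial.coeff_map]
          exact hbB
        have hqb0 : qb ≠ 0 := fun h => hqbc (by simp [h])
        have hroots : (Z.filter (fun a => Fin.tail a = b)).card ≤
            qb.roots.toFinset.card := by
          apply Finset.card_le_card_of_injOn (fun a => (a 0 : F))
          · intro a ha
            simp only [Finset.coe_filter, Set.mem_setOf_eq, hZ, Finset.mem_filter,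
              Finset.mem_univ, true_and] at ha
            rw [Finset.mem_coe, Multiset.mem_toFinset, Polynomial.mem_roots hqb0]
            have h1 := ha.1
            rw [heval a] at h1
            have htail : (fun i => ((a i.succ : F))) = fun i => ((b i : F)) := by
              funext i; rw [← ha.2]; rfl
            rw [htail] at h1
            exact h1
          · intro a ha a' ha' h0
            simp only [Finset.coe_filter, Set.mem_setOf_eq] at ha ha'
            funext i
            refine Fin.cases ?_ ?_ i
            · exact Subtype.ext h0
            · intro j
              exact congrFun (ha.2.trans ha'.2.symm) j
        have : qb.roots.toFinset.card ≤ dq := by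
          refine le_trans (Multiset.toFinset_card_le _) ?_
          refine le_trans (Polynomial.card_roots' qb) ?_
          exact Polynomial.natDegree_map_le
        exact le_trans hroots this
    have hcard : Z.card ≤ B.card * H.card + H.card ^ n * dq := by
      have h1 : Z.card = ∑ b : Fin n → ↥H, (Z.filter (fun a => Fin.tail a = b)).card :=
        Finset.card_eq_sum_card_fiberwise (fun a _ => Finset.mem_univ _)
      rw [h1]
      calc ∑ b : Fin n → ↥H, (Z.filter (fun a => Fin.tail a = b)).card
          ≤ ∑ b : Fin n → ↥H, (if b ∈ B then H.card else dq) :=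
            Finset.sum_le_sum (fun b _ => hfib b)
        _ = B.card * H.card + (Finset.univ.filter (fun b => b ∉ B)).card * dq := by
            rw [Finset.sum_ite, Finset.sum_const, Finset.sum_const]
            simp only [smul_eq_mul]
            congr 2
            rw [Finset.filter_mem_eq_inter, Finset.univ_inter]
        _ ≤ B.card * H.card + H.card ^ n * dq := by
            gcongr
            refine le_trans (Finset.card_filter_le _ _) ?_
            simp [Fintype.card_fun, Fintype.card_coe]
    have hIH := IH c hc
    calc Z.card * H.card ≤ (B.card * H.card + H.card ^ n * dq) * H.card :=
          Nat.mul_le_mul_right _ hcard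
      _ = B.card * H.card * H.card + dq * (H.card ^ n * H.card) := by ring
      _ ≤ c.totalDegree * H.card ^ n * H.card + dq * (H.card ^ n * H.card) := by
          gcongr
      _ = (c.totalDegree + dq) * H.card ^ (n + 1) := by ring
      _ ≤ p.totalDegree * H.card ^ (n + 1) := by gcongr

end Aux

theorem sudan_list_decoding_multivariate
    (F : Type*) [Field F] (H : Finset F) (h k d t l : ℕ)
    (hH : H.card = h) (hh : 1 ≤ h) (hk : 1 ≤ k) (hd : 1 ≤ d)
    (hl : 1 ≤ l) (hl₁ : l * d > k * (h - 1)) (hl₂ : l * d * h ^ (k - 1) < t)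
    (g : (Fin k → F) → F) :
    ∃ P : MvPolynomial (Fin (k + 1)) F, P ≠ 0 ∧
      P.weightedTotalDegree (Fin.snoc (fun _ : Fin k => 1) d) ≤ l * d ∧
      (∀ a : Fin k → F, (∀ i, a i ∈ H) →
        MvPolynomial.eval (Fin.snoc a (g a)) P = 0) ∧
      ∀ f : MvPolynomial (Fin k) F, f.totalDegree ≤ d →
        (∃ s : Finset (Fin k → F), t ≤ s.card ∧
          (∀ a ∈ s, ∀ i, a i ∈ H) ∧ ∀ a ∈ s, MvPolynomial.eval a f = g a) →
        (MvPolynomial.X (Fin.last k) - MvPolynomial.rename Fin.castSucc f) ∣ P := by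
  classical
  obtain ⟨x0, hx0⟩ : H.Nonempty := Finset.card_pos.mp (by omega)
  set w : Fin (k+1) → ℕ := Fin.snoc (fun _ : Fin k => 1) d with hw
  -- the monomial family
  set μ : Option (Fin k → Fin h) → (Fin (k+1) →₀ ℕ) := fun j =>
    Option.rec (Finsupp.single (Fin.last k) 1)
      (fun v => Finsupp.equivFunOnFinite.symm (Fin.snoc (fun i => ((v i : ℕ))) 0)) j
    with hμ
  have hμsome : ∀ v (x : Fin (k+1)),
      μ (some v) x = (Fin.snoc (fun i => ((v i : ℕ))) 0 : Fin (k+1) → ℕ) x := by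
    intro v x; simp [hμ]
  have hμinj : Function.Injective μ := by
    intro j j' hjj
    match j, j' with
    | none, none => rfl
    | none, some v =>
      exfalso
      have := congrFun (congrArg (fun m : Fin (k+1) →₀ ℕ => (m : Fin (k+1) → ℕ)) hjj)
        (Fin.last k)
      simp [hμ, Finsupp.single_eq_same, Fin.snoc_last] at this
    | some v, none =>
      exfalso
      have := congrFun (congrArg (fun m : Fin (k+1) →₀ ℕ => (m : Fin (k+1) → ℕ)) hjj)
        (Fin.last k)
      simp [hμ, Finsupp.single_eq_same, Fin.snoc_last] at this
    | some v, some v' =>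
      congr 1
      funext i
      have := congrFun (congrArg (fun m : Fin (k+1) →₀ ℕ => (m : Fin (k+1) → ℕ)) hjj)
        (Fin.castSucc i)
      simp only [hμsome, Fin.snoc_castSucc] at this
      exact Fin.val_injective this
  -- weights of the monomials
  have hμw : ∀ j, (Finsupp.weight w) (μ j) ≤ l * d := by
    intro j
    match j with
    | none =>
      have : (Finsupp.weight w) (Finsupp.single (Fin.last k) 1) = d := by
        rw [Finsupp.weight_apply, Finsupp.sum_single_index (by simp)]
        simp [hw, Fin.snoc_last]
      rw [hμ]
      simp only
      rw [this]
      calc d = 1 * d := (one_mul d).symm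
        _ ≤ l * d := Nat.mul_le_mul_right d hl
    | some v =>
      rw [Finsupp.weight_apply, Finsupp.sum_fintype _ _ (by simp)]
      have : ∀ x : Fin (k+1), μ (some v) x • w x ≤ (Fin.snoc (fun i => ((v i : ℕ))) 0 : Fin (k+1) → ℕ) x := by
        intro x
        refine Fin.lastCases ?_ ?_ x
        · simp [hμsome, Fin.snoc_last]
        · intro i
          simp [hμsome, Fin.snoc_castSucc, hw]
      calc ∑ x : Fin (k+1), μ (some v) x • w x
          ≤ ∑ x : Fin (k+1), Fin.snoc (fun i => ((v i : ℕ))) 0 x :=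
            Finset.sum_le_sum (fun x _ => this x)
        _ = ∑ i : Fin k, ((v i : ℕ)) := by
            rw [Fin.sum_univ_castSucc]
            simp [Fin.snoc_castSucc, Fin.snoc_last]
        _ ≤ ∑ _i : Fin k, (h - 1) :=
            Finset.sum_le_sum (fun i _ => Nat.le_pred_of_lt (v i).isLt)
        _ = k * (h - 1) := by simp [Finset.sum_const, mul_comm]
        _ ≤ l * d := le_of_lt hl₁
  -- linear algebra: find a nonzero kernel vector
  set T := (Fin k → ↥H) with hT
  set pt : T → (Fin k → F) := fun a i => ((a i : F)) with hpt
  set M : Matrix T (Option (Fin k → Fin h)) F := fun a j =>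
    eval (Fin.snoc (pt a) (g (pt a))) (monomial (μ j) (1 : F)) with hM
  have hninj : ¬ Function.Injective M.mulVecLin := by
    intro hinj
    have h1 := LinearMap.finrank_le_finrank_of_injective hinj
    rw [Module.finrank_fintype_fun_eq_card, Module.finrank_fintype_fun_eq_card] at h1
    rw [Fintype.card_option, Fintype.card_fun, Fintype.card_fun, Fintype.card_fin,
      Fintype.card_fin, Fintype.card_coe, hH] at h1
    exact Nat.not_succ_le_self _ h1
  have hker : ∃ c : Option (Fin k → Fin h) → F, c ≠ 0 ∧ M.mulVec c = 0 := by
    have h2 : LinearMap.ker M.mulVecLin ≠ ⊥ := fun hbot =>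
      hninj (LinearMap.ker_eq_bot.mp hbot)
    obtain ⟨c, hcmem, hc0⟩ := (Submodule.ne_bot_iff _).mp h2
    exact ⟨c, hc0, by simpa [Matrix.mulVecLin_apply] using hcmem⟩
  obtain ⟨c, hc0, hck⟩ := hker
  set P : MvPolynomial (Fin (k+1)) F := ∑ j : Option (Fin k → Fin h), monomial (μ j) (c j)
    with hP
  -- coefficients of P
  have hcoeff : ∀ j0, coeff (μ j0) P = c j0 := by
    intro j0
    rw [hP, MvPolynomial.coeff_sum]
    have : ∀ j, coeff (μ j0) (monomial (μ j) (c j)) = if j = j0 then c j else 0 := by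
      intro j
      rw [MvPolynomial.coeff_monomial]
      congr 1
      simp [hμinj.eq_iff]
    rw [Finset.sum_congr rfl (fun j _ => this j)]
    simp
  have hPne : P ≠ 0 := by
    obtain ⟨j0, hj0⟩ := Function.ne_iff.mp hc0
    intro hzero
    apply hj0
    rw [← hcoeff j0, hzero, MvPolynomial.coeff_zero]
    simp
  -- weighted degree of P
  have hPw : P.weightedTotalDegree w ≤ l * d := by
    apply Finset.sup_le
    intro m hm
    have hmc : coeff m P ≠ 0 := MvPolynomial.mem_support_iff.mp hm
    have : ∃ j, μ j = m := by
      by_contra hnone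
      push_neg at hnone
      apply hmc
      rw [hP, MvPolynomial.coeff_sum]
      apply Finset.sum_eq_zero
      intro j _
      rw [MvPolynomial.coeff_monomial, if_neg (hnone j)]
    obtain ⟨j, rfl⟩ := this
    exact hμw j
  -- vanishing of P
  have hPvanish : ∀ a : Fin k → F, (∀ i, a i ∈ H) →
      MvPolynomial.eval (Fin.snoc a (g a)) P = 0 := by
    intro a ha
    set aT : T := fun i => (⟨a i, ha i⟩ : ↥H) with haT
    have hpa : pt aT = a := by funext i; rfl
    have : MvPolynomial.eval (Fin.snoc a (g a)) P =
        ∑ j : Option (Fin k → Fin h), M aT j * c j := by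
      rw [hP, map_sum]
      apply Finset.sum_congr rfl
      intro j _
      rw [hM]
      simp only [hpa]
      rw [MvPolynomial.eval_monomial, MvPolynomial.eval_monomial]
      ring
    rw [this]
    have := congrFun hck aT
    simpa [Matrix.mulVec, dotProduct] using this
  refine ⟨P, hPne, hPw, hPvanish, ?_⟩
  -- divisibility
  intro f hf ⟨s, hst, hsH, hsg⟩
  set e := sudanLastEquiv F k with he
  set Q : MvPolynomial (Fin k) F := Polynomial.eval f (e P) with hQ
  -- evaluation of Q
  have hQeval : ∀ a : Fin k → F,
      MvPolynomial.eval a Q = MvPolynomial.eval (Fin.snoc a (MvPolynomial.eval a f)) P := by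
    intro a
    rw [hQ, show Polynomial.eval f (e P) = Polynomial.eval₂ (RingHom.id _) f (e P) from rfl,
      Polynomial.hom_eval₂, RingHom.comp_id, Polynomial.eval₂_eq_eval_map, he,
      ← sudanLastEquiv_eval]
  -- total degree of Q
  have hQdeg : Q.totalDegree ≤ l * d := by
    have hterm : ∀ j : Option (Fin k → Fin h),
        (Polynomial.eval f (e (monomial (μ j) (c j)))).totalDegree ≤ l * d := by
      intro j
      match j with
      | none =>
        have hm : (monomial (μ none) (c none) : MvPolynomial (Fin (k+1)) F)
            = C (c none) * X (Fin.last k) := by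
          have h0 : μ none = Finsupp.single (Fin.last k) 1 := rfl
          rw [h0, MvPolynomial.monomial_eq, Finsupp.prod_single_index (by rw [pow_zero]),
            pow_one]
        rw [hm, map_mul, he, sudanLastEquiv_C, sudanLastEquiv_X_last, Polynomial.eval_mul,
          Polynomial.eval_C, Polynomial.eval_X]
        refine le_trans (MvPolynomial.totalDegree_mul _ _) ?_
        rw [MvPolynomial.totalDegree_C, zero_add]
        calc f.totalDegree ≤ d := hf
          _ = 1 * d := (one_mul d).symm
          _ ≤ l * d := Nat.mul_le_mul_right d hl
      | some v =>
        have hmap : Finsupp.mapDomain Fin.castSucc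
            (Finsupp.equivFunOnFinite.symm (fun i => ((v i : ℕ)))) = μ (some v) := by
          ext x
          refine Fin.lastCases ?_ ?_ x
          · rw [Finsupp.mapDomain_notin_range]
            · rw [hμsome, Fin.snoc_last]
            · rintro ⟨j, hj⟩
              exact absurd hj (Fin.castSucc_lt_last j).ne
          · intro i
            rw [Finsupp.mapDomain_apply (Fin.castSucc_injective k), hμsome,
              Fin.snoc_castSucc]
            simp
        have hm : (monomial (μ (some v)) (c (some v)) : MvPolynomial (Fin (k+1)) F)
            = rename Fin.castSucc (monomial
                (Finsupp.equivFunOnFinite.symm (fun i => ((v i : ℕ)))) (c (some v))) := by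
          rw [rename_monomial, hmap]
        rw [hm, he, sudanLastEquiv_rename, Polynomial.eval_C]
        rcases eq_or_ne (c (some v)) 0 with h0 | h0
        · simp [h0]
        · rw [MvPolynomial.totalDegree_monomial _ h0]
          rw [Finsupp.sum_fintype _ _ (fun _ => rfl)]
          calc (∑ i : Fin k, (Finsupp.equivFunOnFinite.symm
                  (fun i => ((v i : ℕ))) : Fin k →₀ ℕ) i)
              = ∑ i : Fin k, ((v i : ℕ)) := by
                apply Finset.sum_congr rfl
                intro i _
                simp
            _ ≤ ∑ _i : Fin k, (h - 1) :=
                Finset.sum_le_sum (fun i _ => Nat.le_pred_of_lt (v i).isLt)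
            _ = k * (h - 1) := by simp [Finset.sum_const, mul_comm]
            _ ≤ l * d := le_of_lt hl₁
    rw [hQ, hP, map_sum, Polynomial.eval_finset_sum]
    refine le_trans (MvPolynomial.totalDegree_finset_sum _ _) ?_
    apply Finset.sup_le
    intro j _
    exact hterm j
  -- Q vanishes on s
  have hQzero : ∀ a ∈ s, MvPolynomial.eval a Q = 0 := by
    intro a has
    rw [hQeval a, hsg a has]
    exact hPvanish a (hsH a has)
  -- Q = 0 by counting
  have hQ0 : Q = 0 := by
    by_contra hQne
    have hsz := sudan_aux_sz F H k Q hQne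
    set Zf := Finset.univ.filter
        (fun a : Fin k → ↥H => eval (fun i => ((a i : F))) Q = 0) with hZf
    have hinj : t ≤ Zf.card := by
      refine le_trans hst ?_
      apply Finset.card_le_card_of_injOn
        (fun a i => if hai : a i ∈ H then (⟨a i, hai⟩ : ↥H) else ⟨x0, hx0⟩)
      · intro a has
        rw [hZf, Finset.mem_coe, Finset.mem_filter]
        refine ⟨Finset.mem_univ _, ?_⟩
        have : (fun i => ((if hai : a i ∈ H then (⟨a i, hai⟩ : ↥H) else ⟨x0, hx0⟩ : ↥H) : F))
            = a := by
          funext i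
          rw [dif_pos (hsH a has i)]
        rw [this]
        exact hQzero a has
      · intro a ha a' ha' haa
        funext i
        have h1 := congrFun haa i
        dsimp only at h1
        rw [dif_pos (hsH a (Finset.mem_coe.mp ha) i),
          dif_pos (hsH a' (Finset.mem_coe.mp ha') i)] at h1
        exact Subtype.ext_iff.mp h1
    have hchain : t * h ≤ l * d * h ^ k := by
      calc t * h ≤ Zf.card * h := Nat.mul_le_mul_right h hinj
        _ = Zf.card * H.card := by rw [hH]
        _ ≤ Q.totalDegree * H.card ^ k := hsz
        _ ≤ (l * d) * h ^ k := by rw [hH]; exact Nat.mul_le_mul_right _ hQdeg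
    have hlt : l * d * h ^ k < t * h := by
      have : h ^ k = h ^ (k - 1) * h := by
        conv_lhs => rw [← Nat.sub_add_cancel hk]
        rw [pow_succ]
      rw [this, ← mul_assoc]
      exact (Nat.mul_lt_mul_right (show 0 < h by omega)).mpr hl₂
    exact absurd hchain (not_le.mpr hlt)
  -- conclude divisibility
  have hroot : (Polynomial.X - Polynomial.C f) ∣ e P := by
    rw [Polynomial.dvd_iff_isRoot]
    exact hQ0
  have := map_dvd (e.symm.toAlgHom.toRingHom) hroot
  rw [map_sub] at this
  have hsymmX : e.symm Polynomial.X = X (Fin.last k) := by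
    rw [AlgEquiv.symm_apply_eq, he, sudanLastEquiv_X_last]
  have hsymmC : e.symm (Polynomial.C f) = rename Fin.castSucc f := by
    rw [AlgEquiv.symm_apply_eq, he, sudanLastEquiv_rename]
  simpa [hsymmX, hsymmC, AlgEquiv.symm_apply_apply] using this
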